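/- Let g ∈ GL(d,ℝ) have singular value decomposition g = u·a·v with u, v orthogonal and a = diag(σ₁,…,σ_d), σ₁ ≥ … ≥ σ_d > 0, and suppose σ₁ > σ₂ and σ_{d−1} > σ_d. Let v₀ = v⁻¹e₁ (so [v₀] is the point orthogonal to the Cartan repelling hyperplane of g). Then for any c ≥ 0, the image under g of the projectivized round ball 𝓑([v₀], c) (the projectivization of the Euclidean ball of radius c centered at v₀ in the affine hyperplane tangent to the unit sphere at v₀) equals the projectivized ellipsoid centered at u[e₁] = U₁(g) with axes in directions u[e₂],…,u[e_d] and half-lengths c·σ₂/σ₁, …, c·σ_d/σ₁. -/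

import Mathlib

open Matrix
open scoped LinearAlgebra.Projectivization

/-- The projectivization of a set of vectors (its image in `ℝP^{d-1}`). -/
def projSet {d : ℕ} (S : Set (Fin d → ℝ)) : Set (ℙ ℝ (Fin d → ℝ)) :=
  {p | ∃ x : Fin d → ℝ, ∃ hx : x ≠ 0, x ∈ S ∧ p = Projectivization.mk ℝ x hx}

/-- Orthogonal matrices (transposed) preserve the dot product. -/
lemma aux_dot {d : ℕ} (M : Matrix (Fin d) (Fin d) ℝ) (h : M * Mᵀ = 1)
    (x y : Fin d → ℝ) : (Mᵀ.mulVec x) ⬝ᵥ (Mᵀ.mulVec y) = x ⬝ᵥ y := by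
  rw [Matrix.dotProduct_mulVec, Matrix.mulVec_transpose, Matrix.vecMul_vecMul, h,
    Matrix.vecMul_one]

/-- Key computation: the image of `vᵀ(e₁ + s)` under `u · diag σ · v`. -/
lemma aux_key {d : ℕ} (u v : Matrix (Fin d) (Fin d) ℝ) (σ : Fin d → ℝ)
    (i0 : Fin d) (hσ0 : σ i0 ≠ 0) (hvvt : v * vᵀ = 1) (s : Fin d → ℝ) :
    (u * Matrix.diagonal σ * v).mulVec
        (vᵀ.mulVec (Pi.single i0 1) + vᵀ.mulVec s)
      = σ i0 • (u.mulVec (Pi.single i0 1) +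
          ∑ i, ((σ i / σ i0) * s i) • u.mulVec (Pi.single i 1)) := by
  have h1 : vᵀ.mulVec (Pi.single i0 1) + vᵀ.mulVec s
      = vᵀ.mulVec (Pi.single i0 1 + s) := (Matrix.mulVec_add _ _ _).symm
  have h2 : (Matrix.diagonal σ).mulVec (Pi.single i0 1 + s)
      = σ i0 • (Pi.single i0 1 : Fin d → ℝ)
        + ∑ i, (σ i * s i) • (Pi.single i 1 : Fin d → ℝ) := by
    funext j
    have hsum : (∑ i, (σ i * s i) • (Pi.single i 1 : Fin d → ℝ)) j = σ j * s j := by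
      rw [Finset.sum_apply]
      simp [Pi.single_apply, mul_ite, Finset.sum_ite_eq]
    simp only [Matrix.mulVec_diagonal, Pi.add_apply, Pi.smul_apply, hsum]
    by_cases hj : j = i0 <;> simp [hj, Pi.single_apply, mul_add]
  calc (u * Matrix.diagonal σ * v).mulVec
        (vᵀ.mulVec (Pi.single i0 1) + vᵀ.mulVec s)
      = (u * Matrix.diagonal σ * v * vᵀ).mulVec (Pi.single i0 1 + s) := by
        rw [h1, Matrix.mulVec_mulVec]
    _ = (u * Matrix.diagonal σ).mulVec (Pi.single i0 1 + s) := by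
        rw [mul_assoc, hvvt, mul_one]
    _ = u.mulVec ((Matrix.diagonal σ).mulVec (Pi.single i0 1 + s)) := by
        rw [Matrix.mulVec_mulVec]
    _ = σ i0 • u.mulVec (Pi.single i0 1)
        + ∑ i, (σ i * s i) • u.mulVec (Pi.single i 1) := by
        rw [h2, Matrix.mulVec_add, Matrix.mulVec_smul]
        congr 1
        rw [← Matrix.mulVecLin_apply, map_sum]
        refine Finset.sum_congr rfl fun i _ => ?_
        rw [_root_.map_smul, Matrix.mulVecLin_apply]
    _ = σ i0 • (u.mulVec (Pi.single i0 1) +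
          ∑ i, ((σ i / σ i0) * s i) • u.mulVec (Pi.single i 1)) := by
        rw [smul_add, Finset.smul_sum]
        congr 1
        refine Finset.sum_congr rfl fun i _ => ?_
        rw [smul_smul]
        field_simp

theorem stmt16 (d : ℕ) (hd : 2 ≤ d)
    (g u a v : Matrix (Fin d) (Fin d) ℝ)
    (hu : u ∈ Matrix.orthogonalGroup (Fin d) ℝ)
    (hv : v ∈ Matrix.orthogonalGroup (Fin d) ℝ)
    (σ : Fin d → ℝ) (hσpos : ∀ i, 0 < σ i)
    (hσmono : ∀ i j : Fin d, i ≤ j → σ j ≤ σ i)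
    (ha : a = Matrix.diagonal σ) (hsvd : g = u * a * v)
    (hgap1 : σ ⟨1, by omega⟩ < σ ⟨0, by omega⟩)
    (hgapd : σ ⟨d - 1, by omega⟩ < σ ⟨d - 2, by omega⟩)
    (c : ℝ) (hc : 0 ≤ c)
    (v₀ : Fin d → ℝ) (hv₀ : v₀ = vᵀ.mulVec (Pi.single ⟨0, by omega⟩ 1)) :
    projSet (g.mulVec ''
        {x : Fin d → ℝ | ∃ w : Fin d → ℝ,
          w ⬝ᵥ v₀ = 0 ∧ w ⬝ᵥ w ≤ c ^ 2 ∧ x = v₀ + w}) =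
    projSet
        {x : Fin d → ℝ | ∃ t : Fin d → ℝ,
          t ⟨0, by omega⟩ = 0 ∧ (∑ i, (t i) ^ 2) ≤ 1 ∧
          x = u.mulVec (Pi.single ⟨0, by omega⟩ 1) +
            ∑ i, ((c * σ i / σ ⟨0, by omega⟩) * t i) • u.mulVec (Pi.single i 1)} := by
  subst ha hsvd hv₀
  set i0 : Fin d := ⟨0, by omega⟩ with hi0def
  have hσ0 : σ i0 ≠ 0 := (hσpos i0).ne'
  have hvvt : v * vᵀ = 1 := by
    have := (Matrix.mem_orthogonalGroup_iff (Fin d) ℝ).mp hv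
    exact this
  have hvtv : vᵀ * v = 1 := by
    have := (Matrix.mem_orthogonalGroup_iff' (Fin d) ℝ).mp hv
    exact this
  have hdotsq : ∀ y : Fin d → ℝ, y ⬝ᵥ y = ∑ i, y i ^ 2 := fun y => by
    simp [dotProduct, sq]
  ext p
  simp only [projSet, Set.mem_setOf_eq, Set.mem_image]
  constructor
  · rintro ⟨x, hx, ⟨x', ⟨w, hw0, hwc, rfl⟩, rfl⟩, rfl⟩
    -- set s = v w
    set s : Fin d → ℝ := v.mulVec w with hs
    have hws : vᵀ.mulVec s = w := by
      rw [hs, Matrix.mulVec_mulVec, hvtv, Matrix.one_mulVec]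
    have hs0 : s i0 = 0 := by
      have h := aux_dot v hvvt s (Pi.single i0 1)
      rw [hws, dotProduct_single, mul_one] at h
      rw [← h]; exact hw0
    have hss : s ⬝ᵥ s = w ⬝ᵥ w := by
      have h := aux_dot v hvvt s s
      rw [hws] at h; exact h.symm
    have hkey := aux_key u v σ i0 hσ0 hvvt s
    rw [hws] at hkey
    -- choose t
    obtain ⟨t, ht0, ht1, hcoef⟩ :
        ∃ t : Fin d → ℝ, t i0 = 0 ∧ (∑ i, (t i) ^ 2) ≤ 1 ∧
          ∀ i, (c * σ i / σ i0) * t i = (σ i / σ i0) * s i := by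
      by_cases hc0 : c = 0
      · -- then w = 0 and s = 0
        have hwzero : w = 0 := by
          have h1 : ∑ i, w i ^ 2 ≤ 0 := by
            rw [← hdotsq]; simpa [hc0] using hwc
          have h2 : ∑ i, w i ^ 2 = 0 :=
            le_antisymm h1 (Finset.sum_nonneg fun i _ => sq_nonneg _)
          funext i
          have := (Finset.sum_eq_zero_iff_of_nonneg
            (fun i _ => sq_nonneg (w i))).mp h2 i (Finset.mem_univ i)
          exact pow_eq_zero_iff (two_ne_zero) |>.mp this
        have hszero : s = 0 := by rw [hs, hwzero, Matrix.mulVec_zero]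
        exact ⟨0, rfl, by simp, fun i => by simp [hszero]⟩
      · refine ⟨fun i => s i / c, by simp [hs0], ?_, fun i => ?_⟩
        · have hc2 : (0:ℝ) < c ^ 2 := by positivity
          rw [show (∑ i, (s i / c) ^ 2) = (∑ i, s i ^ 2) / c ^ 2 by
            rw [Finset.sum_div]; exact Finset.sum_congr rfl fun i _ => div_pow _ _ _]
          rw [div_le_one hc2, ← hdotsq, hss]
          exact hwc
        · field_simp
    have hkey2 : (u * Matrix.diagonal σ * v).mulVec (vᵀ.mulVec (Pi.single i0 1) + w)
        = σ i0 • (u.mulVec (Pi.single i0 1) +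
          ∑ i, ((c * σ i / σ i0) * t i) • u.mulVec (Pi.single i 1)) := by
      rw [hkey]
      congr 2
      exact (Finset.sum_congr rfl fun i _ => by rw [hcoef i]).symm
    have hXne : (u.mulVec (Pi.single i0 1) +
        ∑ i, ((c * σ i / σ i0) * t i) • u.mulVec (Pi.single i 1)) ≠ 0 := by
      intro h0
      exact hx (hkey2.trans (by rw [h0, smul_zero]))
    refine ⟨u.mulVec (Pi.single i0 1) +
        ∑ i, ((c * σ i / σ i0) * t i) • u.mulVec (Pi.single i 1), hXne,
        ⟨t, ht0, ht1, rfl⟩, ?_⟩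
    exact (Projectivization.mk_eq_mk_iff' ℝ _ _ hx hXne).mpr ⟨σ i0, hkey2.symm⟩
  · rintro ⟨x, hx, ⟨t, ht0, ht1, rfl⟩, rfl⟩
    set s : Fin d → ℝ := fun i => c * t i with hs
    have hkey := aux_key u v σ i0 hσ0 hvvt s
    have hcoef : ∀ i, (σ i / σ i0) * s i = (c * σ i / σ i0) * t i := fun i => by
      rw [hs]; ring
    have hkey' : (u * Matrix.diagonal σ * v).mulVec
        (vᵀ.mulVec (Pi.single i0 1) + vᵀ.mulVec s)
        = σ i0 • (u.mulVec (Pi.single i0 1) +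
            ∑ i, ((c * σ i / σ i0) * t i) • u.mulVec (Pi.single i 1)) := by
      rw [hkey]
      congr 2
      exact Finset.sum_congr rfl fun i _ => by rw [hcoef i]
    have hne : (u * Matrix.diagonal σ * v).mulVec
        (vᵀ.mulVec (Pi.single i0 1) + vᵀ.mulVec s) ≠ 0 := by
      rw [hkey']
      exact smul_ne_zero hσ0 hx
    refine ⟨(u * Matrix.diagonal σ * v).mulVec
        (vᵀ.mulVec (Pi.single i0 1) + vᵀ.mulVec s), hne,
      ⟨vᵀ.mulVec (Pi.single i0 1) + vᵀ.mulVec s,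
        ⟨vᵀ.mulVec s, ?_, ?_, rfl⟩, rfl⟩, ?_⟩
    · -- orthogonality
      have h := aux_dot v hvvt s (Pi.single i0 1)
      rw [dotProduct_single, mul_one] at h
      rw [h]
      show c * t i0 = 0
      rw [ht0, mul_zero]
    · -- norm bound
      have h := aux_dot v hvvt s s
      rw [h, hdotsq]
      calc (∑ i, s i ^ 2) = c ^ 2 * ∑ i, t i ^ 2 := by
            rw [Finset.mul_sum]
            exact Finset.sum_congr rfl fun i _ => by rw [hs]; ring
        _ ≤ c ^ 2 * 1 := by
            apply mul_le_mul_of_nonneg_left ht1 (by positivity)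
        _ = c ^ 2 := mul_one _
    · refine (Projectivization.mk_eq_mk_iff' ℝ _ _ _ _).mpr
        ⟨(σ i0)⁻¹, by rw [hkey', smul_smul, inv_mul_cancel₀ hσ0, one_smul]⟩
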